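/- Let G be a finite 3-connected simple graph of order n, where n ≥ 6. Then the number of contractible non-edges of G is at most n(n−5)/2. -/

import Mathlib

open SimpleGraph

variable {V : Type*}

/-- A graph is `k`-connected: it has at least `k+1` vertices, and removing any set of
fewer than `k` vertices leaves a connected graph. -/
def KConnected (k : ℕ) (G : SimpleGraph V) : Prop :=
  k + 1 ≤ Nat.card V ∧ ∀ S : Set V, S.ncard < k → (G.induce Sᶜ).Connected

/-- Contraction of the non-edge `{u, v}`: `u` and `v` are replaced by a single
vertex (represented here by `u`), adjacent to every vertex that was adjacent to
`u` or to `v`. -/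
def contractNonEdge (G : SimpleGraph V) (u v : V) : SimpleGraph {w : V // w ≠ v} where
  Adj a b := a ≠ b ∧ (G.Adj a.1 b.1 ∨ (a.1 = u ∧ G.Adj v b.1) ∨ (b.1 = u ∧ G.Adj a.1 v))
  symm := ⟨by
    rintro a b ⟨hab, h | ⟨h1, h2⟩ | ⟨h1, h2⟩⟩
    · exact ⟨hab.symm, Or.inl h.symm⟩
    · exact ⟨hab.symm, Or.inr (Or.inr ⟨h1, h2.symm⟩)⟩
    · exact ⟨hab.symm, Or.inr (Or.inl ⟨h1, h2.symm⟩)⟩⟩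
  loopless := ⟨fun a h => h.1 rfl⟩

/-- `{u, v}` is a contractible non-edge of `G`: a non-edge whose contraction yields
a `3`-connected graph. -/
def IsContractibleNonEdge (G : SimpleGraph V) (u v : V) : Prop :=
  u ≠ v ∧ ¬ G.Adj u v ∧ KConnected 3 (contractNonEdge G u v)

/-- The set of contractible non-edges of `G`, as unordered pairs of vertices. -/
def contractibleNonEdges (G : SimpleGraph V) : Set (Sym2 V) :=
  {p | ∃ u v : V, p = s(u, v) ∧ IsContractibleNonEdge G u v}

/-- `S` is a cut of `G`: deleting the vertices of `S` leaves a disconnected graph. -/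
def IsCutSet (G : SimpleGraph V) (S : Set V) : Prop :=
  ¬ (G.induce Sᶜ).Preconnected

/-- `C` is the vertex set of a (connected) component of `G − S`. -/
def IsCompOf (G : SimpleGraph V) (S : Set V) (C : Set V) : Prop :=
  C.Nonempty ∧ C ⊆ Sᶜ ∧ (G.induce C).Connected ∧
    ∀ x ∈ C, ∀ y, y ∉ S → G.Adj x y → y ∈ C

/-! ### Auxiliary material for the proof of `stmt6` -/

lemma no_reach_of_isolated {A : Type*} {H : SimpleGraph A} {x y : A} (hxy : x ≠ y)
    (hiso : ∀ z, ¬ H.Adj x z) : ¬ H.Reachable x y := by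
  rintro ⟨w⟩
  cases w with
  | nil => exact hxy rfl
  | cons h _ => exact hiso _ h

lemma mindeg3 [Fintype V] {G : SimpleGraph V} (hG : KConnected 3 G) (v : V) :
    3 ≤ (G.neighborSet v).ncard := by
  by_contra hlt
  push_neg at hlt
  set S := G.neighborSet v with hS
  have hconn := hG.2 S hlt
  have hv : v ∈ Sᶜ := by simp [hS]
  -- find another vertex in Sᶜ
  have hcard : 1 < Sᶜ.ncard := by
    have := Set.ncard_add_ncard_compl S
    have h4 : 4 ≤ Nat.card V := hG.1
    omega
  obtain ⟨x, y, hx, hy, hxy⟩ := (Set.one_lt_ncard_iff (Set.toFinite _)).1 hcard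
  have : ∃ w, w ∈ Sᶜ ∧ w ≠ v := by
    by_cases hxv : x = v
    · exact ⟨y, hy, fun h => hxy (by rw [hxv, h])⟩
    · exact ⟨x, hx, hxv⟩
  obtain ⟨w, hw, hwv⟩ := this
  have := hconn.preconnected ⟨v, hv⟩ ⟨w, hw⟩
  refine no_reach_of_isolated (fun h => hwv (congrArg Subtype.val h).symm) ?_ this
  rintro ⟨z, hz⟩ hadj
  have : G.Adj v z := by simpa [comap_adj] using hadj
  exact hz this

lemma handshake_lb [Fintype V] (G : SimpleGraph V) (k : ℕ)
    (h : ∀ v : V, k ≤ (G.neighborSet v).ncard) :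
    k * Fintype.card V ≤ 2 * G.edgeSet.ncard := by
  classical
  have hdeg : ∀ v : V, (G.neighborSet v).ncard = G.degree v := by
    intro v
    rw [← G.card_neighborFinset_eq_degree, ← Set.ncard_coe_finset]
    congr 1
    ext w
    simp [mem_neighborFinset]
  have hsum : ∑ v : V, G.degree v = 2 * G.edgeFinset.card :=
    G.sum_degrees_eq_twice_card_edges
  have he : G.edgeSet.ncard = G.edgeFinset.card := by
    rw [← coe_edgeFinset, Set.ncard_coe_finset]
  calc k * Fintype.card V = ∑ _v : V, k := by
        rw [Finset.sum_const, Finset.card_univ, smul_eq_mul, mul_comm]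
      _ ≤ ∑ v : V, G.degree v := Finset.sum_le_sum (fun v _ => (hdeg v) ▸ h v)
      _ = 2 * G.edgeSet.ncard := by rw [hsum, he]

def badNonEdges (G : SimpleGraph V) : Set (Sym2 V) :=
  {p | ∃ u v : V, p = s(u, v) ∧ u ≠ v ∧ ¬ G.Adj u v ∧
    ∃ t : V, t ≠ u ∧ t ≠ v ∧ IsCutSet G {u, v, t}}

lemma noContract {G : SimpleGraph V} {u v t : V} (huv : u ≠ v)
    (htu : t ≠ u) (htv : t ≠ v) (hcut : IsCutSet G {u, v, t}) :
    ¬ KConnected 3 (contractNonEdge G u v) := by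
  intro hK
  classical
  set K := contractNonEdge G u v with hKdef
  set S' : Set {w : V // w ≠ v} := {⟨u, huv⟩, ⟨t, htv⟩} with hS'
  have hnc : S'.ncard < 3 := by
    have h1 : S'.ncard ≤ 2 := le_trans (Set.ncard_insert_le _ _) (by simp)
    omega
  have hconn := (hK.2 S' hnc).preconnected
  simp only [IsCutSet, Preconnected, not_forall] at hcut
  obtain ⟨X, Y, hXY⟩ := hcut
  have hmem : ∀ (w : V), w ∉ ({u, v, t} : Set V) → w ≠ u ∧ w ≠ v ∧ w ≠ t := by
    intro w hw
    simp only [Set.mem_insert_iff, Set.mem_singleton_iff, not_or] at hw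
    exact ⟨hw.1, hw.2.1, hw.2.2⟩
  have hmem' : ∀ (w : V) (hwv : w ≠ v), w ≠ u → w ≠ t → (⟨w, hwv⟩ : {w : V // w ≠ v}) ∈ S'ᶜ := by
    intro w hwv hwu hwt
    simp only [hS', Set.mem_compl_iff, Set.mem_insert_iff, Set.mem_singleton_iff, not_or]
    exact ⟨fun h => hwu (congrArg Subtype.val h), fun h => hwt (congrArg Subtype.val h)⟩
  have hKmem : ∀ (W : ↥(S'ᶜ)), W.1.1 ∉ ({u, v, t} : Set V) := by
    rintro ⟨⟨w, hwv⟩, hwS⟩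
    simp only [hS', Set.mem_compl_iff, Set.mem_insert_iff, Set.mem_singleton_iff, not_or] at hwS
    simp only [Set.mem_insert_iff, Set.mem_singleton_iff, not_or]
    exact ⟨fun h => hwS.1 (Subtype.ext h), hwv, fun h => hwS.2 (Subtype.ext h)⟩
  let F : (K.induce S'ᶜ) →g (G.induce ({u, v, t} : Set V)ᶜ) :=
    { toFun := fun W => ⟨W.1.1, hKmem W⟩
      map_rel' := by
        rintro ⟨⟨w1, h1v⟩, h1⟩ ⟨⟨w2, h2v⟩, h2⟩ hadj
        have hK12 : (⟨w1, h1v⟩ : {w : V // w ≠ v}) ≠ ⟨w2, h2v⟩ ∧ (G.Adj w1 w2 ∨ (w1 = u ∧ G.Adj v w2) ∨ (w2 = u ∧ G.Adj w1 v)) := hadj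
        obtain ⟨hne, hor⟩ := hK12
        have h1u : w1 ≠ u := fun h => ((hKmem ⟨⟨w1, h1v⟩, h1⟩) (by simp [h]))
        have h2u : w2 ≠ u := fun h => ((hKmem ⟨⟨w2, h2v⟩, h2⟩) (by simp [h]))
        have : G.Adj w1 w2 := by
          rcases hor with h | ⟨h, _⟩ | ⟨h, _⟩
          · exact h
          · exact absurd h h1u
          · exact absurd h h2u
        exact this }
  obtain ⟨hXu, hXv, hXt⟩ := hmem X.1 X.2
  obtain ⟨hYu, hYv, hYt⟩ := hmem Y.1 Y.2
  have hreach := hconn ⟨⟨X.1, hXv⟩, hmem' _ hXv hXu hXt⟩ ⟨⟨Y.1, hYv⟩, hmem' _ hYv hYu hYt⟩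
  have := hreach.map F
  exact hXY (by convert this using 2 <;> exact Subtype.ext rfl)

lemma bad_not_contractible {G : SimpleGraph V} {p : Sym2 V}
    (hp : p ∈ badNonEdges G) : p ∉ contractibleNonEdges G := by
  obtain ⟨u, v, rfl, huv, hnadj, t, htu, htv, hcut⟩ := hp
  rintro ⟨u', v', heq, h1, h2, h3⟩
  rw [Sym2.eq_iff] at heq
  rcases heq with ⟨rfl, rfl⟩ | ⟨rfl, rfl⟩
  · exact noContract huv htu htv hcut h3
  · refine noContract huv.symm htv htu ?_ h3
    have : ({v, u, t} : Set V) = {u, v, t} := Set.insert_comm v u {t}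
    rw [this]
    exact hcut

def star3 (G : SimpleGraph V) (v a b c : V) : SimpleGraph {w : V // w ≠ v} where
  Adj x y := x ≠ y ∧ (G.Adj x.1 y.1 ∨ (x.1 ∈ ({a, b, c} : Set V) ∧ y.1 ∈ ({a, b, c} : Set V)))
  symm := ⟨by
    rintro x y ⟨h1, h2⟩
    refine ⟨h1.symm, ?_⟩
    rcases h2 with h | ⟨ha, hb⟩
    · exact Or.inl h.symm
    · exact Or.inr ⟨hb, ha⟩⟩
  loopless := ⟨fun x h => h.1 rfl⟩

def liftv {v : V} (S' : Set {w : V // w ≠ v}) (X : ↥((Subtype.val '' S')ᶜ)) (hXv : X.1 ≠ v) :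
    ↥(S'ᶜ) :=
  ⟨⟨X.1, hXv⟩, fun hm => X.2 ⟨⟨X.1, hXv⟩, hm, rfl⟩⟩

lemma star3_walk {G : SimpleGraph V} {v a b c : V}
    (hN : ∀ x : V, G.Adj v x → x ∈ ({a, b, c} : Set V))
    (S' : Set {w : V // w ≠ v}) :
    ∀ (L : ℕ) (X Y : ↥((Subtype.val '' S')ᶜ)) (hXv : X.1 ≠ v) (hYv : Y.1 ≠ v)
      (p : (G.induce (Subtype.val '' S')ᶜ).Walk X Y), p.length ≤ L →
      ((star3 G v a b c).induce S'ᶜ).Reachable (liftv S' X hXv) (liftv S' Y hYv) := by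
  intro L
  induction L with
  | zero =>
    intro X Y hXv hYv p hp
    have hXY : X = Y := SimpleGraph.Walk.eq_of_length_eq_zero (Nat.le_zero.1 hp)
    subst hXY
    exact Reachable.refl _
  | succ L IH =>
    intro X Y hXv hYv p hp
    cases p with
    | nil => exact Reachable.refl _
    | cons h q =>
      rename_i Z
      by_cases hZv : Z.1 = v
      · cases q with
        | nil => exact absurd hZv hYv
        | cons h2 q2 =>
          rename_i Z2
          have hXadj : G.Adj X.1 Z.1 := h
          have hXabc : X.1 ∈ ({a, b, c} : Set V) := hN X.1 (by have := hXadj.symm; rwa [hZv] at this)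
          have hZadj2 : G.Adj Z.1 Z2.1 := h2
          have hZ2adj : G.Adj v Z2.1 := by have := hZadj2; rwa [hZv] at this
          have hZ2abc : Z2.1 ∈ ({a, b, c} : Set V) := hN Z2.1 hZ2adj
          have hZ2v : Z2.1 ≠ v := hZ2adj.ne'
          have hlen : q2.length ≤ L := by
            simp only [Walk.length_cons] at hp
            omega
          by_cases hXZ2 : X = Z2
          · subst hXZ2
            exact IH X Y hZ2v hYv q2 hlen
          · refine Reachable.trans (Adj.reachable ?_) (IH Z2 Y hZ2v hYv q2 hlen)
            show (⟨X.1, hXv⟩ : {w : V // w ≠ v}) ≠ ⟨Z2.1, hZ2v⟩ ∧ (G.Adj X.1 Z2.1 ∨ (X.1 ∈ ({a, b, c} : Set V) ∧ Z2.1 ∈ ({a, b, c} : Set V)))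
            refine ⟨?_, Or.inr ⟨hXabc, hZ2abc⟩⟩
            intro hc
            have : X.1 = Z2.1 := Subtype.mk_eq_mk.1 hc
            exact hXZ2 (Subtype.ext this)
      · have hadj : G.Adj X.1 Z.1 := h
        have hlen : q.length ≤ L := by
          simp only [Walk.length_cons] at hp
          omega
        refine Reachable.trans (Adj.reachable ?_) (IH Z Y hZv hYv q hlen)
        show (⟨X.1, hXv⟩ : {w : V // w ≠ v}) ≠ ⟨Z.1, hZv⟩ ∧ (G.Adj X.1 Z.1 ∨ (X.1 ∈ ({a, b, c} : Set V) ∧ Z.1 ∈ ({a, b, c} : Set V)))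
        exact ⟨fun hc => hadj.ne (Subtype.mk_eq_mk.1 hc), Or.inl hadj⟩

lemma sym2_repr (p : Sym2 V) : ∃ x y : V, p = s(x, y) :=
  p.ind (fun x y => ⟨x, y, rfl⟩)

lemma exists_notMem_of_ncard_lt [Fintype V] (S : Set V) (h : S.ncard < Nat.card V) :
    ∃ x : V, x ∉ S := by
  by_contra hc
  push_neg at hc
  have : S = Set.univ := Set.eq_univ_of_forall hc
  rw [this, Set.ncard_univ] at h
  omega

lemma card_ne [Fintype V] (v : V) : Nat.card {w : V // w ≠ v} = Nat.card V - 1 := by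
  classical
  simp [Nat.card_eq_fintype_card]


lemma reduction {V : Type*} [Fintype V] (G : SimpleGraph V) (hG : KConnected 3 G)
    (h6 : 6 ≤ Fintype.card V) (v : V) (hdeg : (G.neighborSet v).ncard = 3) :
    ∃ (G' : SimpleGraph {w : V // w ≠ v}), KConnected 3 G' ∧
      G'.edgeSet.ncard + 3 + (badNonEdges G').ncard ≤
        G.edgeSet.ncard + (badNonEdges G).ncard := by
  classical
  obtain ⟨a, b, c, hab, hac, hbc, hNset⟩ := Set.ncard_eq_three.1 hdeg
  have hAdj : ∀ x, G.Adj v x ↔ x ∈ ({a, b, c} : Set V) := by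
    intro x
    rw [← mem_neighborSet, hNset]
  have hN : ∀ x, G.Adj v x → x ∈ ({a, b, c} : Set V) := fun x h => (hAdj x).1 h
  have hva : G.Adj v a := (hAdj a).2 (by simp)
  have hvb : G.Adj v b := (hAdj b).2 (by simp)
  have hvc : G.Adj v c := (hAdj c).2 (by simp)
  have hav : a ≠ v := hva.ne'
  have hbv : b ≠ v := hvb.ne'
  have hcv : c ≠ v := hvc.ne'
  have hvabc : v ∉ ({a, b, c} : Set V) := fun hm => G.irrefl ((hAdj v).2 hm)
  have hcardV : 6 ≤ Nat.card V := by rwa [Nat.card_eq_fintype_card]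
  have hcardV' : Nat.card {w : V // w ≠ v} = Nat.card V - 1 := card_ne v
  refine ⟨star3 G v a b c, ⟨?_, ?_⟩, ?_⟩
  · omega
  · -- connectivity of the reduced graph
    intro S' hS'
    set S : Set V := Subtype.val '' S' with hSdef
    have hSn : S.ncard = S'.ncard := Set.ncard_image_of_injective _ Subtype.val_injective
    have hGc := hG.2 S (by omega)
    rw [connected_iff]
    constructor
    · intro P Q
      have hPm : P.1.1 ∈ Sᶜ := by
        intro hm
        obtain ⟨w, hw, hweq⟩ := hm
        exact P.2 ((Subtype.ext hweq : w = P.1) ▸ hw)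
      have hQm : Q.1.1 ∈ Sᶜ := by
        intro hm
        obtain ⟨w, hw, hweq⟩ := hm
        exact Q.2 ((Subtype.ext hweq : w = Q.1) ▸ hw)
      obtain ⟨p⟩ := hGc.preconnected ⟨P.1.1, hPm⟩ ⟨Q.1.1, hQm⟩
      have hre := star3_walk hN S' p.length ⟨P.1.1, hPm⟩ ⟨Q.1.1, hQm⟩ P.1.2 Q.1.2 p le_rfl
      have e1 : liftv S' ⟨P.1.1, hPm⟩ P.1.2 = P := Subtype.ext (Subtype.ext rfl)
      have e2 : liftv S' ⟨Q.1.1, hQm⟩ Q.1.2 = Q := Subtype.ext (Subtype.ext rfl)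
      rwa [e1, e2] at hre
    · have : S'.ncard < Nat.card {w : V // w ≠ v} := by omega
      obtain ⟨x, hx⟩ := exists_notMem_of_ncard_lt S' this
      exact ⟨⟨x, hx⟩⟩
  · -- the counting inequality
    set G' := star3 G v a b c with hG'def
    set emb : Sym2 {w : V // w ≠ v} → Sym2 V := Sym2.map Subtype.val with hembdef
    have hembinj : Function.Injective emb := Sym2.map.injective Subtype.val_injective
    have hnotv : ∀ q : Sym2 {w : V // w ≠ v}, v ∉ emb q := by
      intro q
      induction q using Sym2.ind with
      | _ x y =>
        rw [hembdef, Sym2.map_pair_eq, Sym2.mem_iff]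
        rintro (h | h)
        · exact x.2 h.symm
        · exact y.2 h.symm
    -- the triple {a,b,c} is a cut set of G
    obtain ⟨w0, hw0⟩ : ∃ w0, w0 ∉ ({v, a, b, c} : Set V) := by
      apply exists_notMem_of_ncard_lt
      have h1 : ({v, a, b, c} : Set V).ncard ≤ 4 := by
        have i1 := Set.ncard_insert_le v ({a, b, c} : Set V)
        have i2 := Set.ncard_insert_le a ({b, c} : Set V)
        have i3 := Set.ncard_insert_le b ({c} : Set V)
        have i4 : ({c} : Set V).ncard = 1 := Set.ncard_singleton c
        omega
      omega
    simp only [Set.mem_insert_iff, Set.mem_singleton_iff, not_or] at hw0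
    have hcut_abc : IsCutSet G {a, b, c} := by
      intro hpre
      have hwm : w0 ∈ ({a, b, c} : Set V)ᶜ := by
        rintro (h | h | h) <;> simp_all
      have hre := hpre ⟨v, hvabc⟩ ⟨w0, hwm⟩
      refine no_reach_of_isolated ?_ ?_ hre
      · intro h
        exact hw0.1 (Subtype.mk_eq_mk.1 h).symm
      · rintro ⟨z, hz⟩ hadj
        exact hz (hN z hadj)
    have hthird : ∀ x y : V, x ∈ ({a, b, c} : Set V) → y ∈ ({a, b, c} : Set V) → x ≠ y →
        ∃ t, t ≠ x ∧ t ≠ y ∧ ({x, y, t} : Set V) = {a, b, c} := by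
      intro x y hx hy hxy
      simp only [Set.mem_insert_iff, Set.mem_singleton_iff] at hx hy
      rcases hx with rfl | rfl | rfl <;> rcases hy with rfl | rfl | rfl <;>
        first
          | exact absurd rfl hxy
          | exact ⟨c, by first | assumption | (apply Ne.symm; assumption),
              by first | assumption | (apply Ne.symm; assumption),
              by ext z; simp; try tauto⟩
          | exact ⟨b, by first | assumption | (apply Ne.symm; assumption),
              by first | assumption | (apply Ne.symm; assumption),
              by ext z; simp; try tauto⟩
          | exact ⟨a, by first | assumption | (apply Ne.symm; assumption),
              by first | assumption | (apply Ne.symm; assumption),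
              by ext z; simp; try tauto⟩
    have hbadabc : ∀ x y : V, x ∈ ({a, b, c} : Set V) → y ∈ ({a, b, c} : Set V) → x ≠ y →
        ¬ G.Adj x y → s(x, y) ∈ badNonEdges G := by
      intro x y hx hy hxy hnadj
      obtain ⟨t, htx, hty, hset⟩ := hthird x y hx hy hxy
      exact ⟨x, y, rfl, hxy, hnadj, t, htx, hty, by rw [hset]; exact hcut_abc⟩
    -- inclusion of mapped edges
    have hA : emb '' G'.edgeSet ⊆ G.edgeSet ∪ badNonEdges G := by
      rintro q ⟨p', hp', rfl⟩
      revert hp'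
      induction p' using Sym2.ind with
      | _ x y =>
        intro hp'
        rw [mem_edgeSet] at hp'
        obtain ⟨hne, hor⟩ : x ≠ y ∧ (G.Adj x.1 y.1 ∨ (x.1 ∈ ({a, b, c} : Set V) ∧ y.1 ∈ ({a, b, c} : Set V))) := hp'
        have hxyv : x.1 ≠ y.1 := fun h => hne (Subtype.ext h)
        rw [hembdef, Sym2.map_pair_eq]
        rcases hor with h | ⟨hx, hy⟩
        · exact Or.inl ((mem_edgeSet _).2 h)
        · by_cases hGxy : G.Adj x.1 y.1
          · exact Or.inl ((mem_edgeSet _).2 hGxy)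
          · exact Or.inr (hbadabc _ _ hx hy hxyv hGxy)
    -- the three edges at v
    have hB : ({s(v, a), s(v, b), s(v, c)} : Set (Sym2 V)) ⊆ G.edgeSet := by
      rintro q (rfl | rfl | rfl)
      · exact (mem_edgeSet _).2 hva
      · exact (mem_edgeSet _).2 hvb
      · exact (mem_edgeSet _).2 hvc
    -- mapped bad pairs are bad
    have hC : emb '' badNonEdges G' ⊆ badNonEdges G := by
      rintro q ⟨p', hp', rfl⟩
      obtain ⟨x, y, rfl, hxy, hnadj, t, htx, hty, hcut'⟩ := hp'
      rw [hembdef, Sym2.map_pair_eq]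
      have hxyv : x.1 ≠ y.1 := fun h => hxy (Subtype.ext h)
      refine ⟨x.1, y.1, rfl, hxyv, ?_, t.1, fun h => htx (Subtype.ext h),
        fun h => hty (Subtype.ext h), ?_⟩
      · intro hGxy
        exact hnadj (show x ≠ y ∧ (G.Adj x.1 y.1 ∨ (x.1 ∈ ({a, b, c} : Set V) ∧ y.1 ∈ ({a, b, c} : Set V))) from ⟨hxy, Or.inl hGxy⟩)
      · -- transfer the cut
        have hSimg : Subtype.val '' ({x, y, t} : Set {w : V // w ≠ v}) =
            ({x.1, y.1, t.1} : Set V) := by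
          rw [Set.image_insert_eq, Set.image_insert_eq, Set.image_singleton]
        intro hpre
        rw [← hSimg] at hpre
        simp only [IsCutSet, Preconnected, not_forall] at hcut'
        obtain ⟨P, Q, hPQ⟩ := hcut'
        have hPm : P.1.1 ∈ (Subtype.val '' ({x, y, t} : Set {w : V // w ≠ v}))ᶜ := by
          intro hm
          obtain ⟨w, hw, hweq⟩ := hm
          exact P.2 ((Subtype.ext hweq : w = P.1) ▸ hw)
        have hQm : Q.1.1 ∈ (Subtype.val '' ({x, y, t} : Set {w : V // w ≠ v}))ᶜ := by
          intro hm
          obtain ⟨w, hw, hweq⟩ := hm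
          exact Q.2 ((Subtype.ext hweq : w = Q.1) ▸ hw)
        obtain ⟨p⟩ := hpre ⟨P.1.1, hPm⟩ ⟨Q.1.1, hQm⟩
        have hre := star3_walk hN _ p.length ⟨P.1.1, hPm⟩ ⟨Q.1.1, hQm⟩ P.1.2 Q.1.2 p le_rfl
        have e1 : liftv _ ⟨P.1.1, hPm⟩ P.1.2 = P := Subtype.ext (Subtype.ext rfl)
        have e2 : liftv _ ⟨Q.1.1, hQm⟩ Q.1.2 = Q := Subtype.ext (Subtype.ext rfl)
        rw [e1, e2] at hre
        exact hPQ hre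
    -- disjointness
    have hEbad : ∀ (H : SimpleGraph V), Disjoint H.edgeSet (badNonEdges H) := by
      intro H
      rw [Set.disjoint_left]
      rintro q hqE ⟨u1, v1, rfl, h1, h2, _⟩
      exact h2 ((mem_edgeSet _).1 hqE)
    have hEbad' : Disjoint G'.edgeSet (badNonEdges G') := by
      rw [Set.disjoint_left]
      rintro q hqE ⟨u1, v1, rfl, h1, h2, _⟩
      exact h2 ((mem_edgeSet _).1 hqE)
    have hAC : Disjoint (emb '' G'.edgeSet) (emb '' badNonEdges G') :=
      (Set.disjoint_image_iff hembinj).2 hEbad'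
    have hvB : ∀ q ∈ ({s(v, a), s(v, b), s(v, c)} : Set (Sym2 V)), v ∈ q := by
      rintro q (rfl | rfl | rfl) <;> simp
    have hAB : Disjoint (emb '' G'.edgeSet) ({s(v, a), s(v, b), s(v, c)} : Set (Sym2 V)) := by
      rw [Set.disjoint_left]
      rintro q ⟨p', _, rfl⟩ hqB
      exact hnotv p' (hvB _ hqB)
    have hCB : Disjoint ({s(v, a), s(v, b), s(v, c)} : Set (Sym2 V)) (emb '' badNonEdges G') := by
      rw [Set.disjoint_left]
      rintro q hqB ⟨p', _, rfl⟩
      exact hnotv p' (hvB _ hqB)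
    -- cardinalities
    have hBne1 : s(v, a) ≠ s(v, b) := by
      intro hq
      rw [Sym2.eq_iff] at hq
      rcases hq with ⟨-, h⟩ | ⟨h, -⟩
      · exact hab h
      · exact hbv h.symm
    have hBne2 : s(v, a) ≠ s(v, c) := by
      intro hq
      rw [Sym2.eq_iff] at hq
      rcases hq with ⟨-, h⟩ | ⟨h, -⟩
      · exact hac h
      · exact hcv h.symm
    have hBne3 : s(v, b) ≠ s(v, c) := by
      intro hq
      rw [Sym2.eq_iff] at hq
      rcases hq with ⟨-, h⟩ | ⟨h, -⟩
      · exact hbc h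
      · exact hcv h.symm
    have hBcard : ({s(v, a), s(v, b), s(v, c)} : Set (Sym2 V)).ncard = 3 := by
      rw [Set.ncard_insert_of_notMem (by simp [hBne1, hBne2]),
        Set.ncard_insert_of_notMem (by simp [hBne3]), Set.ncard_singleton]
    set B : Set (Sym2 V) := {s(v, a), s(v, b), s(v, c)} with hBdef
    set U : Set (Sym2 V) := (emb '' G'.edgeSet) ∪ (B ∪ emb '' badNonEdges G') with hUdef
    have hUsub : U ⊆ G.edgeSet ∪ badNonEdges G := by
      rintro q (hq | hq | hq)
      · exact hA hq
      · exact Or.inl (hB hq)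
      · exact Or.inr (hC hq)
    have hUcard : U.ncard = G'.edgeSet.ncard + 3 + (badNonEdges G').ncard := by
      rw [hUdef, Set.ncard_union_eq (by
          rw [Set.disjoint_union_right]
          exact ⟨hAB, hAC⟩),
        Set.ncard_union_eq hCB, Set.ncard_image_of_injective _ hembinj,
        Set.ncard_image_of_injective _ hembinj, hBcard]
      ring
    have hfin : (G.edgeSet ∪ badNonEdges G).ncard =
        G.edgeSet.ncard + (badNonEdges G).ncard := Set.ncard_union_eq (hEbad G)
    calc G'.edgeSet.ncard + 3 + (badNonEdges G').ncard = U.ncard := hUcard.symm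
      _ ≤ (G.edgeSet ∪ badNonEdges G).ncard := Set.ncard_le_ncard hUsub (Set.toFinite _)
      _ = G.edgeSet.ncard + (badNonEdges G).ncard := hfin

lemma base5 {V : Type*} [Fintype V] (G : SimpleGraph V) (h5 : Fintype.card V = 5)
    (hG : KConnected 3 G) : 9 ≤ G.edgeSet.ncard + (badNonEdges G).ncard := by
  classical
  have hmin : ∀ w : V, 3 ≤ (G.neighborSet w).ncard := mindeg3 hG
  have hhs := handshake_lb G 3 hmin
  rw [h5] at hhs
  have he8 : 8 ≤ G.edgeSet.ncard := by omega
  by_cases he9 : 9 ≤ G.edgeSet.ncard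
  · omega
  · have he : G.edgeSet.ncard = 8 := by omega
    have htop : (⊤ : SimpleGraph V).edgeSet.ncard = 10 := by
      rw [← coe_edgeFinset, Set.ncard_coe_finset, card_edgeFinset_top_eq_card_choose_two, h5]
      decide
    have hsub : G.edgeSet ⊆ (⊤ : SimpleGraph V).edgeSet := edgeSet_mono le_top
    set NE := (⊤ : SimpleGraph V).edgeSet \ G.edgeSet with hNE
    have hNEcard : NE.ncard = 2 := by
      rw [hNE, Set.ncard_diff hsub, htop, he]
    obtain ⟨p, q, hpq, hNEeq⟩ := Set.ncard_eq_two.1 hNEcard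
    obtain ⟨x, y, rfl⟩ := sym2_repr p
    obtain ⟨z, w, rfl⟩ := sym2_repr q
    have hpmem : s(x, y) ∈ NE := by rw [hNEeq]; left; rfl
    have hqmem : s(z, w) ∈ NE := by rw [hNEeq]; right; rfl
    have hxy : x ≠ y := (top_adj x y).1 ((mem_edgeSet _).1 hpmem.1)
    have hzw : z ≠ w := (top_adj z w).1 ((mem_edgeSet _).1 hqmem.1)
    have hnxy : ¬ G.Adj x y := fun h => hpmem.2 ((mem_edgeSet _).2 h)
    have hnzw : ¬ G.Adj z w := fun h => hqmem.2 ((mem_edgeSet _).2 h)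
    have hdts : ∀ r s1 s2 : V, r ≠ s1 → r ≠ s2 → s1 ≠ s2 → ¬ G.Adj r s1 → ¬ G.Adj r s2 →
        False := by
      intro r s1 s2 h1 h2 h12 hn1 hn2
      have hsub2 : G.neighborSet r ⊆ ({r, s1, s2} : Set V)ᶜ := by
        intro u hu
        have hGru : G.Adj r u := hu
        simp only [Set.mem_compl_iff, Set.mem_insert_iff, Set.mem_singleton_iff, not_or]
        exact ⟨fun h => G.irrefl (h ▸ hGru), fun h => hn1 (h ▸ hGru), fun h => hn2 (h ▸ hGru)⟩
      have hc3 : ({r, s1, s2} : Set V).ncard = 3 := by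
        rw [Set.ncard_insert_of_notMem (by simp [h1, h2]),
          Set.ncard_insert_of_notMem (by simp [h12]), Set.ncard_singleton]
      have hle := Set.ncard_le_ncard hsub2 (Set.toFinite _)
      have hcompl := Set.ncard_add_ncard_compl ({r, s1, s2} : Set V)
      rw [Nat.card_eq_fintype_card, h5] at hcompl
      have := hmin r
      omega
    have hxz : x ≠ z := by
      rintro rfl
      have hyw : y ≠ w := by rintro rfl; exact hpq rfl
      exact hdts x y w hxy hzw hyw hnxy hnzw
    have hxw : x ≠ w := by
      rintro rfl
      have hyz : y ≠ z := by
        rintro rfl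
        exact hpq (by rw [Sym2.eq_iff]; tauto)
      exact hdts x y z hxy (Ne.symm hzw) hyz hnxy (fun h => hnzw h.symm)
    have hyz : y ≠ z := by
      rintro rfl
      have hxw2 : x ≠ w := hxw
      exact hdts y x w (Ne.symm hxy) hzw hxw2 (fun h => hnxy h.symm) hnzw
    have hyw : y ≠ w := by
      rintro rfl
      exact hdts y x z (Ne.symm hxy) (Ne.symm hzw) hxz (fun h => hnxy h.symm)
        (fun h => hnzw h.symm)
    obtain ⟨u, hu⟩ : ∃ u, u ∉ ({x, y, z, w} : Set V) := by
      apply exists_notMem_of_ncard_lt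
      have i1 := Set.ncard_insert_le x ({y, z, w} : Set V)
      have i2 := Set.ncard_insert_le y ({z, w} : Set V)
      have i3 := Set.ncard_insert_le z ({w} : Set V)
      have i4 : ({w} : Set V).ncard = 1 := Set.ncard_singleton w
      rw [Nat.card_eq_fintype_card, h5]
      omega
    simp only [Set.mem_insert_iff, Set.mem_singleton_iff, not_or] at hu
    obtain ⟨hux, huy, huz, huw⟩ := hu
    have huniv : ∀ r : V, r = x ∨ r = y ∨ r = z ∨ r = w ∨ r = u := by
      intro r
      by_contra hr
      push_neg at hr
      obtain ⟨hrx, hry, hrz, hrw, hru⟩ := hr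
      have h5set : ({x, y, z, w, u} : Set V).ncard = 5 := by
        rw [Set.ncard_insert_of_notMem (by simp [hxy, hxz, hxw, Ne.symm hux]),
          Set.ncard_insert_of_notMem (by simp [hyz, hyw, Ne.symm huy]),
          Set.ncard_insert_of_notMem (by simp [hzw, Ne.symm huz]),
          Set.ncard_insert_of_notMem (by simp [Ne.symm huw]), Set.ncard_singleton]
      have hequniv : ({x, y, z, w, u} : Set V) = Set.univ := by
        apply Set.eq_of_subset_of_ncard_le (Set.subset_univ _)
        rw [Set.ncard_univ, Nat.card_eq_fintype_card, h5, h5set]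
      have : r ∈ ({x, y, z, w, u} : Set V) := hequniv ▸ Set.mem_univ r
      simp only [Set.mem_insert_iff, Set.mem_singleton_iff] at this
      tauto
    have hcut : IsCutSet G {x, y, u} := by
      intro hpre
      have hzm : z ∈ ({x, y, u} : Set V)ᶜ := by
        simp only [Set.mem_compl_iff, Set.mem_insert_iff, Set.mem_singleton_iff, not_or]
        exact ⟨Ne.symm hxz, Ne.symm hyz, Ne.symm huz⟩
      have hwm : w ∈ ({x, y, u} : Set V)ᶜ := by
        simp only [Set.mem_compl_iff, Set.mem_insert_iff, Set.mem_singleton_iff, not_or]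
        exact ⟨Ne.symm hxw, Ne.symm hyw, Ne.symm huw⟩
      have hre := hpre ⟨z, hzm⟩ ⟨w, hwm⟩
      refine no_reach_of_isolated (fun h => hzw (Subtype.mk_eq_mk.1 h)) ?_ hre
      rintro ⟨r, hr⟩ hadj
      have hGzr : G.Adj z r := hadj
      rcases huniv r with rfl | rfl | rfl | rfl | rfl
      · exact hr (by simp)
      · exact hr (by simp)
      · exact G.irrefl hGzr
      · exact hnzw hGzr
      · exact hr (by simp)
    have hbadmem : s(x, y) ∈ badNonEdges G :=
      ⟨x, y, rfl, hxy, hnxy, u, hux, huy, hcut⟩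
    have hbadpos : 0 < (badNonEdges G).ncard :=
      (Set.ncard_pos (Set.toFinite _)).2 ⟨_, hbadmem⟩
    omega

lemma core : ∀ (m : ℕ) {V : Type u} [Fintype V] (G : SimpleGraph V),
    Fintype.card V = m → KConnected 3 G → 6 ≤ m →
    2 * m ≤ G.edgeSet.ncard + (badNonEdges G).ncard := by
  intro m
  induction m using Nat.strong_induction_on with
  | _ m IH =>
    intro V _ G hm hG h6
    classical
    by_cases h4 : ∀ w : V, 4 ≤ (G.neighborSet w).ncard
    · have := handshake_lb G 4 h4
      rw [hm] at this
      omega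
    · push_neg at h4
      obtain ⟨v, hv⟩ := h4
      have h3 := mindeg3 hG v
      have hdeg : (G.neighborSet v).ncard = 3 := by omega
      obtain ⟨G', hK', hineq⟩ := reduction G hG (by omega) v hdeg
      have hcard' : Fintype.card {w : V // w ≠ v} = m - 1 := by
        have hc := card_ne (V := V) v
        rw [Nat.card_eq_fintype_card, Nat.card_eq_fintype_card, hm] at hc
        exact hc
      by_cases hm6 : m = 6
      · have := base5 G' (by rw [hcard', hm6]) hK'
        omega
      · have := IH (m - 1) (by omega) G' hcard' hK' (by omega)
        omega

theorem stmt6 {V : Type*} [Fintype V] (G : SimpleGraph V) (hG : KConnected 3 G)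
    (n : ℕ) (hn : n = Fintype.card V) (h6 : 6 ≤ n) :
    (contractibleNonEdges G).ncard ≤ n * (n - 5) / 2 := by
  classical
  have hcore := core n G hn.symm hG h6
  have hgood_sub : contractibleNonEdges G ⊆ (⊤ : SimpleGraph V).edgeSet := by
    rintro p ⟨u, v, rfl, h1, -, -⟩
    exact (mem_edgeSet _).2 ((top_adj _ _).2 h1)
  have hbad_sub : badNonEdges G ⊆ (⊤ : SimpleGraph V).edgeSet := by
    rintro p ⟨u, v, rfl, h1, -, -⟩
    exact (mem_edgeSet _).2 ((top_adj _ _).2 h1)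
  have hedge_sub : G.edgeSet ⊆ (⊤ : SimpleGraph V).edgeSet := edgeSet_mono le_top
  have d1 : Disjoint (contractibleNonEdges G) (badNonEdges G) := by
    rw [Set.disjoint_left]
    intro q hq1 hq2
    exact bad_not_contractible hq2 hq1
  have d2 : Disjoint (contractibleNonEdges G) G.edgeSet := by
    rw [Set.disjoint_left]
    rintro q ⟨u, v, rfl, -, h2, -⟩ hqE
    exact h2 ((mem_edgeSet _).1 hqE)
  have d3 : Disjoint (badNonEdges G) G.edgeSet := by
    rw [Set.disjoint_left]
    rintro q ⟨u, v, rfl, -, h2, -⟩ hqE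
    exact h2 ((mem_edgeSet _).1 hqE)
  have hUcard : (contractibleNonEdges G ∪ (badNonEdges G ∪ G.edgeSet)).ncard =
      (contractibleNonEdges G).ncard + ((badNonEdges G).ncard + G.edgeSet.ncard) := by
    rw [Set.ncard_union_eq (by rw [Set.disjoint_union_right]; exact ⟨d1, d2⟩),
      Set.ncard_union_eq d3]
  have hUsub : contractibleNonEdges G ∪ (badNonEdges G ∪ G.edgeSet) ⊆
      (⊤ : SimpleGraph V).edgeSet := by
    rintro q (hq | hq | hq)
    · exact hgood_sub hq
    · exact hbad_sub hq
    · exact hedge_sub hq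
  have hle := Set.ncard_le_ncard hUsub (Set.toFinite _)
  rw [hUcard] at hle
  have htopcard : (⊤ : SimpleGraph V).edgeSet.ncard = n * (n - 1) / 2 := by
    rw [← coe_edgeFinset, Set.ncard_coe_finset, card_edgeFinset_top_eq_card_choose_two,
      ← hn, Nat.choose_two_right]
  rw [htopcard] at hle
  have harith : n * (n - 1) / 2 = n * (n - 5) / 2 + 2 * n := by
    obtain ⟨k, rfl⟩ : ∃ k, n = k + 5 := ⟨n - 5, by omega⟩
    obtain ⟨d, hd⟩ : ∃ d, (k + 5) * k = 2 * d := by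
      rcases Nat.even_or_odd k with ⟨j, rfl⟩ | ⟨j, rfl⟩
      · exact ⟨(j + j + 5) * j, by ring⟩
      · exact ⟨(j + 3) * (2 * j + 1), by ring⟩
    have h1 : k + 5 - 1 = k + 4 := by omega
    have h2 : k + 5 - 5 = k := by omega
    rw [h1, h2, hd]
    have h3 : (k + 5) * (k + 4) = 2 * (d + 2 * (k + 5)) := by
      calc (k + 5) * (k + 4) = (k + 5) * k + 4 * (k + 5) := by ring
        _ = 2 * d + 4 * (k + 5) := by rw [hd]
        _ = 2 * (d + 2 * (k + 5)) := by ring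
    rw [h3, Nat.mul_div_cancel_left _ (by norm_num), Nat.mul_div_cancel_left _ (by norm_num)]
  omega
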